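/- Let ((E_n)_{n∈ℕ}, (p_{m,n})_{m≥n}) be an inverse system of vector lattices indexed by the natural numbers, with all connecting maps p_{m,n} : E_m → E_n surjective interval preserving lattice homomorphisms, and let (E, (p_n)) be its inverse limit. Then each canonical projection p_n : E → E_n is surjective and interval preserving. -/
import Mathlib


/-- The set of threads of an inverse system `(E_n, p_{mn})` over `ℕ` inside the
product. -/
def threads {E : ℕ → Type*}
    [∀ n, AddCommGroup (E n)] [∀ n, Module ℝ (E n)]
    (p : ∀ {n m : ℕ}, n ≤ m → (E m →ₗ[ℝ] E n)) : Set (∀ n, E n) :=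
  {u | ∀ (n m : ℕ) (h : n ≤ m), p h (u m) = u n}

/-- Let `((E_n)_{n∈ℕ}, (p_{mn}))` be an inverse system of vector
lattices over `ℕ` whose connecting maps are surjective interval preserving lattice
homomorphisms, and let `(E, (p_n))` be its inverse limit (the thread sublattice with
the restricted coordinate projections).  Then each canonical projection
`p_n : E → E_n` is surjective and interval preserving. -/
theorem inverseLimit_nat_projections_surjective_intervalPreserving
    {E : ℕ → Type*} [∀ n, Lattice (E n)] [∀ n, AddCommGroup (E n)]
    [∀ n, CovariantClass (E n) (E n) (· + ·) (· ≤ ·)] [∀ n, Module ℝ (E n)]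
    (p : ∀ {n m : ℕ}, n ≤ m → (E m →ₗ[ℝ] E n))
    (hplat : ∀ {n m : ℕ} (h : n ≤ m) (a b : E m), p h (a ⊔ b) = p h a ⊔ p h b)
    (hpsurj : ∀ {n m : ℕ} (h : n ≤ m), Function.Surjective (p h))
    (hpip : ∀ {n m : ℕ} (h : n ≤ m) (u : E m), 0 ≤ u →
      (p h) '' Set.Icc 0 u = Set.Icc 0 (p h u))
    (hpcomp : ∀ {n m k : ℕ} (hnm : n ≤ m) (hmk : m ≤ k) (x : E k),
      p hnm (p hmk x) = p (hnm.trans hmk) x) :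
    -- each projection is surjective
    (∀ (n : ℕ) (v : E n), ∃ u ∈ threads p, u n = v) ∧
    -- and interval preserving
    (∀ (n : ℕ), ∀ u ∈ threads p, 0 ≤ u →
      (fun w : ∀ k, E k => w n) '' {w | w ∈ threads p ∧ w ∈ Set.Icc 0 u} =
        Set.Icc 0 (u n)) := by
  -- `p (le_refl n)` is the identity (idempotent surjection)
  have pid : ∀ (n : ℕ) (x : E n), p (le_refl n) x = x := by
    intro n x
    obtain ⟨y, hy⟩ := hpsurj (le_refl n) x
    rw [← hy, hpcomp]
  -- monotonicity from lattice-homomorphism property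
  have pmono : ∀ {a b : ℕ} (h : a ≤ b) {x y : E b}, x ≤ y → p h x ≤ p h y := by
    intro a b h x y hxy
    have h1 := hplat h x y
    rw [sup_eq_right.mpr hxy] at h1
    exact h1 ▸ le_sup_left
  constructor
  · -- surjectivity
    intro n v
    let d : ∀ k, E k := fun k => Nat.rec (p (Nat.zero_le n) v)
      (fun k ih => if h : k + 1 ≤ n then p h v
        else Classical.choose (hpsurj (Nat.le_succ k) ih)) k
    have hdsucc : ∀ k, d (k + 1) = if h : k + 1 ≤ n then p h v
        else Classical.choose (hpsurj (Nat.le_succ k) (d k)) := fun k => rfl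
    have hlow : ∀ k (h : k ≤ n), d k = p h v := by
      intro k hk
      cases k with
      | zero => rfl
      | succ j => rw [hdsucc, dif_pos hk]
    have hstep : ∀ k, p (Nat.le_succ k) (d (k + 1)) = d k := by
      intro k
      by_cases h : k + 1 ≤ n
      · rw [hlow (k + 1) h, hpcomp, hlow k ((Nat.le_succ k).trans h)]
      · rw [hdsucc, dif_neg h]
        exact Classical.choose_spec (hpsurj (Nat.le_succ k) (d k))
    have hthread : ∀ a b (h : a ≤ b), p h (d b) = d a := by
      intro a b h
      induction b, h using Nat.le_induction with
      | base => exact pid a (d a)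
      | succ m hm ih =>
        have h2 := hpcomp hm (Nat.le_succ m) (d (m + 1))
        rw [hstep m, ih] at h2
        exact h2.symm
    exact ⟨d, fun a b h => hthread a b h, (hlow n le_rfl).trans (pid n v)⟩
  · -- interval preserving
    intro n u hu hu0
    apply Set.Subset.antisymm
    · rintro _ ⟨w, ⟨hwth, hw0, hwu⟩, rfl⟩
      exact ⟨hw0 n, hwu n⟩
    · rintro x ⟨hx0, hxu⟩
      -- lifting lemma along one step
      have lift : ∀ k (y : E k), 0 ≤ y → y ≤ u k →
          ∃ z : E (k + 1), (0 ≤ z ∧ z ≤ u (k + 1)) ∧ p (Nat.le_succ k) z = y := by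
        intro k y hy0 hyu
        have h1 := hpip (Nat.le_succ k) (u (k + 1)) (hu0 (k + 1))
        rw [hu k (k + 1) (Nat.le_succ k)] at h1
        have h2 : y ∈ Set.Icc 0 (u k) := ⟨hy0, hyu⟩
        rw [← h1] at h2
        obtain ⟨z, hz, hpz⟩ := h2
        exact ⟨z, ⟨hz.1, hz.2⟩, hpz⟩
      -- bounds for the pushed-down element
      have hbd : ∀ {a : ℕ} (h : a ≤ n), 0 ≤ p h x ∧ p h x ≤ u a := by
        intro a h
        refine ⟨?_, ?_⟩
        · have := pmono h hx0
          rwa [map_zero] at this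
        · have := pmono h hxu
          rwa [hu a n h] at this
      let D : ∀ k, {y : E k // 0 ≤ y ∧ y ≤ u k} := fun k =>
        Nat.rec ⟨p (Nat.zero_le n) x, hbd (Nat.zero_le n)⟩
          (fun k ih => if h : k + 1 ≤ n then ⟨p h x, hbd h⟩
            else ⟨Classical.choose (lift k ih.1 ih.2.1 ih.2.2),
              (Classical.choose_spec (lift k ih.1 ih.2.1 ih.2.2)).1⟩) k
      let d : ∀ k, E k := fun k => (D k).1
      have hdsucc : ∀ k, D (k + 1) = if h : k + 1 ≤ n then ⟨p h x, hbd h⟩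
          else ⟨Classical.choose (lift k (D k).1 (D k).2.1 (D k).2.2),
            (Classical.choose_spec (lift k (D k).1 (D k).2.1 (D k).2.2)).1⟩ :=
        fun k => rfl
      have hlow : ∀ k (h : k ≤ n), d k = p h x := by
        intro k hk
        cases k with
        | zero => rfl
        | succ j => show (D (j + 1)).1 = _; rw [hdsucc, dif_pos hk]
      have hstep : ∀ k, p (Nat.le_succ k) (d (k + 1)) = d k := by
        intro k
        by_cases h : k + 1 ≤ n
        · rw [hlow (k + 1) h, hpcomp, hlow k ((Nat.le_succ k).trans h)]
        · show p (Nat.le_succ k) (D (k + 1)).1 = d k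
          rw [hdsucc, dif_neg h]
          exact (Classical.choose_spec (lift k (D k).1 (D k).2.1 (D k).2.2)).2
      have hthread : ∀ a b (h : a ≤ b), p h (d b) = d a := by
        intro a b h
        induction b, h using Nat.le_induction with
        | base => exact pid a (d a)
        | succ m hm ih =>
          have h2 := hpcomp hm (Nat.le_succ m) (d (m + 1))
          rw [hstep m, ih] at h2
          exact h2.symm
      exact ⟨d, ⟨fun a b h => hthread a b h,
        fun k => (D k).2.1, fun k => (D k).2.2⟩,
        (hlow n le_rfl).trans (pid n x)⟩
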